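/- Let p be a prime and let B be a finite brace whose order is a power of p. If B is supersoluble, then B is centrally nilpotent. -/

import Mathlib

/-- A (skew left) brace: a set with an additive group structure (not necessarily abelian)
and a multiplicative group structure sharing the same identity, satisfying the skew
distributive law `a * (b + c) = a * b + -a + a * c`. -/
class SkewBrace (B : Type*) extends AddGroup B, Group B where
  one_eq_zero : (1 : B) = (0 : B)
  skew_distrib : ∀ a b c : B, a * (b + c) = a * b + -a + a * c

/-- A group is supersoluble if it has a finite chain of normal subgroups with all
factors cyclic. -/
def Group.IsSupersoluble (G : Type*) [Group G] : Prop :=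
  ∃ (n : ℕ) (H : ℕ → Subgroup G),
    H 0 = ⊥ ∧ H n = ⊤ ∧ (∀ i, (H i).Normal) ∧ (∀ i, i < n → H i ≤ H (i + 1)) ∧
    ∀ i, i < n → ∃ x ∈ H (i + 1), ∀ y ∈ H (i + 1), ∃ k : ℤ, (x ^ k)⁻¹ * y ∈ H i

namespace SkewBrace

variable {B : Type*} [SkewBrace B]

/-- `lam a b = -a + a * b`, i.e. `λ_a(b)`. -/
def lam (a b : B) : B := -a + a * b

/-- the star operation `a ∗ b = λ_a(b) - b`. -/
def starOp (a b : B) : B := lam a b + -b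

/-- the additive commutator `[a,b]_+`. -/
def addCommutator (a b : B) : B := -a + -b + a + b

/-- A subbrace of `B`: a subset that is a subgroup of both `(B,+)` and `(B,·)`. -/
structure Subbrace (B : Type*) [SkewBrace B] where
  carrier : Set B
  zero_mem : (0 : B) ∈ carrier
  add_mem : ∀ {a b : B}, a ∈ carrier → b ∈ carrier → a + b ∈ carrier
  neg_mem : ∀ {a : B}, a ∈ carrier → -a ∈ carrier
  mul_mem : ∀ {a b : B}, a ∈ carrier → b ∈ carrier → a * b ∈ carrier
  inv_mem : ∀ {a : B}, a ∈ carrier → a⁻¹ ∈ carrier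

/-- An ideal of `B`: a subbrace that is normal in `(B,+)` and in `(B,·)` and is
invariant under all the maps `λ_b`. -/
structure BraceIdeal (B : Type*) [SkewBrace B] extends Subbrace B where
  addConj_mem : ∀ (b : B) {a : B}, a ∈ carrier → b + a + -b ∈ carrier
  mulConj_mem : ∀ (b : B) {a : B}, a ∈ carrier → b * a * b⁻¹ ∈ carrier
  lam_mem : ∀ (b : B) {a : B}, a ∈ carrier → lam b a ∈ carrier

/-- The additive subgroup underlying a subbrace. -/
def Subbrace.addSubgroup (S : Subbrace B) : AddSubgroup B where
  carrier := S.carrier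
  zero_mem' := S.zero_mem
  add_mem' := S.add_mem
  neg_mem' := S.neg_mem

/-- The multiplicative subgroup underlying a subbrace. -/
def Subbrace.subgroup (S : Subbrace B) : Subgroup B where
  carrier := S.carrier
  one_mem' := by rw [one_eq_zero]; exact S.zero_mem
  mul_mem' := S.mul_mem
  inv_mem' := S.inv_mem

/-- Given ideals `J ≤ I` of `B`, `MemSocQuotRel I J x` says that the coset of `x`
lies in `Soc(I/J) = Ker(λ) ∩ Z(I/J, +)` (for `I = B` take `I = Set.univ`). -/
def MemSocQuotRel (I J : Set B) (x : B) : Prop :=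
  x ∈ I ∧ (∀ y ∈ I, -y + lam x y ∈ J) ∧ ∀ y ∈ I, -(y + x) + (x + y) ∈ J

/-- Given ideals `J ≤ I` of `B`, `MemZetaQuotRel I J x` says that the coset of `x`
lies in `ζ(I/J) = Soc(I/J) ∩ Z(I/J, ·)`. -/
def MemZetaQuotRel (I J : Set B) (x : B) : Prop :=
  MemSocQuotRel I J x ∧ ∀ y ∈ I, (y * x)⁻¹ * (x * y) ∈ J

/-- The coset of `x` lies in `Soc(B/J)`. -/
def MemSocQuot (J : Set B) (x : B) : Prop := MemSocQuotRel Set.univ J x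

/-- The coset of `x` lies in `ζ(B/J)`. -/
def MemZetaQuot (J : Set B) (x : B) : Prop := MemZetaQuotRel Set.univ J x

/-- For ideals `I ≤ J`, the additive group of the quotient `J/I` is infinite cyclic. -/
def QuotAddInfCyclic (I J : Set B) : Prop :=
  ∃ x ∈ J, (∀ y ∈ J, ∃ n : ℤ, -(n • x) + y ∈ I) ∧ ∀ n : ℤ, n • x ∈ I → n = 0

/-- For ideals `I ≤ J`, the quotient `J/I` has prime order `p`. -/
def QuotPrimeOrder (I J : Set B) (p : ℕ) : Prop :=
  p.Prime ∧ ∃ x ∈ J, x ∉ I ∧ p • x ∈ I ∧ ∀ y ∈ J, ∃ n : ℤ, -(n • x) + y ∈ I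

/-- A brace is supersoluble if it has a finite chain of ideals each factor of which
either is additively infinite cyclic and contained in the socle of the corresponding
quotient, or has prime order. -/
def IsSupersoluble (B : Type*) [SkewBrace B] : Prop :=
  ∃ (n : ℕ) (I : ℕ → BraceIdeal B),
    (I 0).carrier = {0} ∧ (I n).carrier = Set.univ ∧
    (∀ i, i < n → (I i).carrier ⊆ (I (i + 1)).carrier) ∧
    ∀ i, i < n →
      (QuotAddInfCyclic (I i).carrier (I (i + 1)).carrier ∧
        ∀ x ∈ (I (i + 1)).carrier, MemSocQuot (I i).carrier x) ∨
      ∃ p : ℕ, QuotPrimeOrder (I i).carrier (I (i + 1)).carrier p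

/-- The upper socle series of the brace (carrier of the ideal) `I`. -/
def socChainRel (I : Set B) : ℕ → Set B
  | 0 => {0}
  | n + 1 => {x | MemSocQuotRel I (socChainRel I n) x}

/-- The upper central series of the brace (carrier of the ideal) `I`. -/
def zetaChainRel (I : Set B) : ℕ → Set B
  | 0 => {0}
  | n + 1 => {x | MemZetaQuotRel I (zetaChainRel I n) x}

/-- The upper socle series `Soc_n(B)` of `B`. -/
def socChain (B : Type*) [SkewBrace B] : ℕ → Set B := socChainRel Set.univ

/-- The upper central series `ζ_n(B)` of `B`. -/
def zetaChain (B : Type*) [SkewBrace B] : ℕ → Set B := zetaChainRel Set.univ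

/-- A brace is centrally nilpotent if its upper central series reaches `B`. -/
def IsCentrallyNilpotent (B : Type*) [SkewBrace B] : Prop :=
  ∃ m : ℕ, zetaChain B m = Set.univ

end SkewBrace

lemma key_mul {G : Type*} [Group G] (p N : ℕ) (hp : p.Prime) (x : G)
    (hx : orderOf x = p) (m : ℤ) (h : x ^ (m ^ (p ^ N)) = x) : x ^ m = x := by
  haveI := Fact.mk hp
  have h1 : x ^ (m ^ (p ^ N) - 1) = 1 := by
    rw [zpow_sub, zpow_one, h, mul_inv_cancel]
  have h2 : ((orderOf x : ℤ)) ∣ m ^ (p ^ N) - 1 := orderOf_dvd_iff_zpow_eq_one.mpr h1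
  rw [hx] at h2
  have h3 : ((m : ZMod p)) ^ (p ^ N) = 1 := by
    have := (ZMod.intCast_zmod_eq_zero_iff_dvd _ p).mpr h2
    push_cast at this
    linear_combination this
  have hm0 : (m : ZMod p) ≠ 0 := by
    intro h0
    rw [h0, zero_pow (pow_ne_zero N hp.pos.ne')] at h3
    exact one_ne_zero h3.symm
  have h4 : orderOf ((m : ZMod p)) ∣ p ^ N := orderOf_dvd_iff_pow_eq_one.mpr h3
  have h5 : orderOf ((m : ZMod p)) ∣ p - 1 :=
    orderOf_dvd_iff_pow_eq_one.mpr (ZMod.pow_card_sub_one_eq_one hm0)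
  have hcop : Nat.Coprime (p ^ N) (p - 1) := by
    apply Nat.Coprime.pow_left
    exact (Nat.coprime_self_sub_right hp.one_lt.le).mpr (Nat.coprime_one_right p)
  have h6 : orderOf ((m : ZMod p)) = 1 := Nat.eq_one_of_dvd_coprimes hcop h4 h5
  have h7 : (m : ZMod p) = 1 := orderOf_eq_one_iff.mp h6
  have h8 : ((p : ℤ)) ∣ m - 1 :=
    (ZMod.intCast_zmod_eq_zero_iff_dvd (m - 1) p).mp (by push_cast [h7]; ring)
  have h9 : x ^ (m - 1) = 1 := orderOf_dvd_iff_zpow_eq_one.mp (by rw [hx]; exact_mod_cast h8)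
  calc x ^ m = x ^ (m - 1) * x ^ (1:ℤ) := by rw [← zpow_add]; ring_nf
  _ = x := by rw [h9, one_mul, zpow_one]

lemma key_add {G : Type*} [AddGroup G] (p N : ℕ) (hp : p.Prime) (x : G)
    (hx : addOrderOf x = p) (m : ℤ) (h : (m ^ (p ^ N)) • x = x) : m • x = x := by
  have hkey := key_mul p N hp (Multiplicative.ofAdd x)
    (by rw [orderOf_ofAdd_eq_addOrderOf]; exact hx) m
    (by rw [← ofAdd_zsmul, h])
  have := hkey
  rw [← ofAdd_zsmul] at this
  exact Multiplicative.ofAdd.injective this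



set_option linter.dupNamespace false

namespace SkewBrace
variable {B : Type*} [SkewBrace B]

lemma neg_one_eq_zero : -(1 : B) = 0 := by rw [one_eq_zero, neg_zero]

lemma mul_eq_add_lam (a b : B) : a * b = a + lam a b := by
  rw [lam, add_neg_cancel_left]

lemma lam_add (a : B) (b c : B) : lam a (b + c) = lam a b + lam a c := by
  rw [lam, lam, lam, skew_distrib]
  simp only [add_assoc]

/-- `lam a` as an additive homomorphism. -/
def lamHom (a : B) : B →+ B := AddMonoidHom.mk' (lam a) (lam_add a)

lemma lam_one (b : B) : lam (1 : B) b = b := by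
  rw [lam, one_mul, neg_one_eq_zero, zero_add]

lemma lam_neg (a b : B) : lam a (-b) = -(lam a b) := map_neg (lamHom a) b

lemma lam_mul (a b c : B) : lam (a * b) c = lam a (lam b c) := by
  have h : lam a (lam b c) = -(lam a b) + lam a (b * c) := by
    rw [show lam b c = -b + b * c from rfl, lam_add, lam_neg]
  rw [h, lam, lam, lam, neg_add_rev, neg_neg]
  simp only [add_assoc, add_neg_cancel_left]
  rw [mul_assoc]

lemma lam_inv_lam (a b : B) : lam a⁻¹ (lam a b) = b := by
  rw [← lam_mul, inv_mul_cancel, lam_one]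

lemma lam_inv_mul_self (u v : B) : lam u (u⁻¹ * v) = -u + v := by
  rw [lam, mul_inv_cancel_left]

/-- bridge between additive and multiplicative congruence mod an ideal -/
lemma bridge (I : BraceIdeal B) (u v : B) :
    -u + v ∈ I.carrier ↔ u⁻¹ * v ∈ I.carrier := by
  constructor
  · intro h
    have h2 := I.lam_mem u⁻¹ h
    rwa [← lam_inv_mul_self u v, lam_inv_lam] at h2
  · intro h
    rw [← lam_inv_mul_self u v]
    exact I.lam_mem u h

/-- conjugation as an additive homomorphism -/
def addConjHom {G : Type*} [AddGroup G] (y : G) : G →+ G :=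
  AddMonoidHom.mk' (fun v => y + v + -y) (by
    intro a b
    simp only [add_assoc, neg_add_cancel_left])

@[simp] lemma addConjHom_apply {G : Type*} [AddGroup G] (y v : G) :
    addConjHom y v = y + v + -y := rfl


/-- Crux: if `J/II` has prime order, then elements of `J` are "central mod `II`". -/
lemma crux {B : Type*} [SkewBrace B] [Finite B] (p k : ℕ) (hp : p.Prime)
    (hcard : Nat.card B = p ^ k) (II J : BraceIdeal B)
    (hq : ∃ q : ℕ, QuotPrimeOrder II.carrier J.carrier q)
    (z : B) (hz : z ∈ J.carrier) (y : B) :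
    (-y + lam z y ∈ II.carrier) ∧ (-(y + z) + (z + y) ∈ II.carrier) ∧
      ((y * z)⁻¹ * (z * y) ∈ II.carrier) := by
  haveI := Fact.mk hp
  obtain ⟨q, hqp, x, hxJ, hxI, hqx, hgen⟩ := hq
  set N : AddSubgroup B := II.addSubgroup with hNdef
  haveI hNn : N.Normal := ⟨fun a ha g => II.addConj_mem g ha⟩
  set S : Subgroup B := II.subgroup with hSdef
  haveI hSn : S.Normal := ⟨fun a ha g => II.mulConj_mem g ha⟩
  have hmemN : ∀ a : B, a ∈ N ↔ a ∈ II.carrier := fun a => Iff.rfl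
  have hmemS : ∀ a : B, a ∈ S ↔ a ∈ II.carrier := fun a => Iff.rfl
  -- cardinalities
  have hcardN : Nat.card (B ⧸ N) ∣ p ^ k := hcard ▸ AddSubgroup.card_quotient_dvd_card N
  have hcardS : Nat.card (B ⧸ S) ∣ p ^ k := hcard ▸ Subgroup.card_quotient_dvd_card S
  have hpk0 : ∀ w : B ⧸ N, (p ^ k) • w = 0 := fun w =>
    addOrderOf_dvd_iff_nsmul_eq_zero.mp ((addOrderOf_dvd_natCard w).trans hcardN)
  -- order of x in B ⧸ N
  have hx0 : ((x : B ⧸ N)) ≠ 0 := fun h => hxI ((QuotientAddGroup.eq_zero_iff x).mp h)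
  have hordx : addOrderOf ((x : B ⧸ N)) = q := by
    have h1 : q • ((x : B ⧸ N)) = 0 := by
      rw [← QuotientAddGroup.mk_nsmul]
      exact (QuotientAddGroup.eq_zero_iff _).mpr hqx
    rcases (hqp.eq_one_or_self_of_dvd _ (addOrderOf_dvd_iff_nsmul_eq_zero.mpr h1)) with h2 | h2
    · exact absurd (AddMonoid.addOrderOf_eq_one_iff.mp h2) hx0
    · exact h2
  -- q = p
  have hqisp : q = p := by
    have h1 : q ∣ p ^ k := hordx ▸ (addOrderOf_dvd_natCard _).trans hcardN
    exact (Nat.prime_dvd_prime_iff_eq hqp hp).mp (hqp.dvd_of_dvd_pow h1)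
  have hqisp2 : p = q := hqisp.symm
  subst hqisp2
  -- generation
  have hgenQ : ∀ w ∈ J.carrier, ∃ n : ℤ, ((w : B ⧸ N)) = n • ((x : B ⧸ N)) := by
    intro w hw
    obtain ⟨n, hn⟩ := hgen w hw
    refine ⟨n, ?_⟩
    rw [← QuotientAddGroup.mk_zsmul]
    exact (QuotientAddGroup.eq.mpr hn).symm
  -- Step A : x is additively central mod N
  have hcentx : ∀ yb : B ⧸ N, yb + ((x : B ⧸ N)) = ((x : B ⧸ N)) + yb := by
    intro yb
    obtain ⟨y', rfl⟩ := QuotientAddGroup.mk_surjective yb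
    have hyxy : y' + x + -y' ∈ J.carrier := J.addConj_mem y' hxJ
    obtain ⟨m, hm⟩ := hgenQ _ hyxy
    have hm' : ((y' : B ⧸ N)) + ((x : B ⧸ N)) + -((y' : B ⧸ N)) = m • ((x : B ⧸ N)) := by
      rw [← QuotientAddGroup.mk_neg, ← QuotientAddGroup.mk_add, ← QuotientAddGroup.mk_add]
      exact hm
    have hiter : ∀ s : ℕ,
        (s • ((y' : B ⧸ N))) + ((x : B ⧸ N)) + -(s • ((y' : B ⧸ N)))
          = (m ^ s) • ((x : B ⧸ N)) := by
      intro s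
      induction s with
      | zero => simp
      | succ s ih =>
        calc ((s + 1) • ((y' : B ⧸ N))) + ((x : B ⧸ N)) + -((s + 1) • ((y' : B ⧸ N)))
            = addConjHom ((y' : B ⧸ N))
              ((s • ((y' : B ⧸ N))) + ((x : B ⧸ N)) + -(s • ((y' : B ⧸ N)))) := by
              rw [addConjHom_apply, succ_nsmul' ((y' : B ⧸ N)) s, neg_add_rev]
              simp only [add_assoc]
          _ = addConjHom ((y' : B ⧸ N)) ((m ^ s) • ((x : B ⧸ N))) := by rw [ih]
          _ = (m ^ s) • addConjHom ((y' : B ⧸ N)) ((x : B ⧸ N)) := map_zsmul _ _ _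
          _ = (m ^ s) • (m • ((x : B ⧸ N))) := by rw [addConjHom_apply, hm']
          _ = (m ^ (s + 1)) • ((x : B ⧸ N)) := by rw [← mul_zsmul', ← pow_succ']
    have hfin : (m ^ (p ^ k)) • ((x : B ⧸ N)) = ((x : B ⧸ N)) := by
      have h2 := hiter (p ^ k)
      rw [hpk0 ((y' : B ⧸ N))] at h2
      rw [← h2, neg_zero, zero_add, add_zero]
    have hmx : m • ((x : B ⧸ N)) = ((x : B ⧸ N)) := key_add p k hp _ hordx m hfin
    have : ((y' : B ⧸ N)) + ((x : B ⧸ N)) + -((y' : B ⧸ N)) = ((x : B ⧸ N)) := by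
      rw [hm', hmx]
    exact add_neg_eq_iff_eq_add.mp this
  have hcentw : ∀ w ∈ J.carrier, ∀ yb : B ⧸ N,
      yb + ((w : B ⧸ N)) = ((w : B ⧸ N)) + yb := by
    intro w hw yb
    obtain ⟨n, hn⟩ := hgenQ w hw
    rw [hn]
    exact (AddCommute.zsmul_right (hcentx yb) n)
  -- Step B : lambda acts trivially on J mod N
  let φ : B → (B ⧸ N →+ B ⧸ N) := fun b =>
    QuotientAddGroup.map N N (lamHom b) (fun a ha => II.lam_mem b ha)
  have hφ : ∀ (b w : B), φ b ((w : B ⧸ N)) = ((lam b w : B) : B ⧸ N) := fun b w =>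
    QuotientAddGroup.map_mk N N (lamHom b) _ w
  have hlamx : ∀ b : B, ((lam b x : B) : B ⧸ N) = ((x : B ⧸ N)) := by
    intro b
    obtain ⟨m, hm⟩ := hgenQ (lam b x) (J.lam_mem b hxJ)
    have hiter : ∀ s : ℕ, ((lam (b ^ s) x : B) : B ⧸ N) = (m ^ s) • ((x : B ⧸ N)) := by
      intro s
      induction s with
      | zero => rw [pow_zero, lam_one, pow_zero, one_zsmul]
      | succ s ih =>
        rw [pow_succ' b s, lam_mul, ← hφ, ih, map_zsmul, hφ, hm, ← mul_zsmul', ← pow_succ']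
    have hb1 : b ^ (p ^ k) = 1 :=
      orderOf_dvd_iff_pow_eq_one.mp ((orderOf_dvd_natCard b).trans (hcard ▸ dvd_rfl))
    have hfin : (m ^ (p ^ k)) • ((x : B ⧸ N)) = ((x : B ⧸ N)) := by
      have h2 := hiter (p ^ k)
      rw [hb1, lam_one] at h2
      exact h2.symm
    have hmx : m • ((x : B ⧸ N)) = ((x : B ⧸ N)) := key_add p k hp _ hordx m hfin
    rw [hm, hmx]
  have hlam : ∀ (b : B), ∀ w ∈ J.carrier, ((lam b w : B) : B ⧸ N) = ((w : B ⧸ N)) := by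
    intro b w hw
    obtain ⟨n, hn⟩ := hgenQ w hw
    rw [← hφ, hn, map_zsmul, hφ, hlamx, ← hn]
  have hmuladd : ∀ (b : B), ∀ w ∈ J.carrier,
      ((b * w : B) : B ⧸ N) = ((b : B ⧸ N)) + ((w : B ⧸ N)) := by
    intro b w hw
    rw [mul_eq_add_lam, QuotientAddGroup.mk_add, hlam b w hw]
  have hinv : ∀ w ∈ J.carrier, ((w⁻¹ : B) : B ⧸ N) = -((w : B ⧸ N)) := by
    intro w hw
    have h1 : ((w * w⁻¹ : B) : B ⧸ N) = ((w : B ⧸ N)) + ((w⁻¹ : B) : B ⧸ N) :=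
      hmuladd w w⁻¹ (J.inv_mem hw)
    rw [mul_inv_cancel, one_eq_zero] at h1
    exact eq_neg_of_add_eq_zero_right h1.symm
  have hzpow : ∀ n : ℤ, ((x ^ n : B) : B ⧸ N) = n • ((x : B ⧸ N)) := by
    intro n
    induction n using Int.induction_on with
    | zero => rw [zpow_zero, one_eq_zero, zero_zsmul]; rfl
    | succ n ih =>
      rw [zpow_add_one, hmuladd (x ^ (n : ℤ)) x hxJ, ih, add_zsmul, one_zsmul]
    | pred n ih =>
      rw [zpow_sub_one, hmuladd (x ^ (-n : ℤ)) x⁻¹ (J.inv_mem hxJ), ih,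
        hinv x hxJ, sub_zsmul, one_zsmul]
  -- x^p ∈ II
  have hxp : x ^ p ∈ II.carrier := by
    have h1 : ((x ^ (p : ℤ) : B) : B ⧸ N) = 0 := by
      rw [hzpow, natCast_zsmul]
      exact addOrderOf_dvd_iff_nsmul_eq_zero.mp (hordx ▸ dvd_rfl)
    rw [zpow_natCast] at h1
    exact (QuotientAddGroup.eq_zero_iff _).mp h1
  -- order of x in B ⧸ S
  have hordxS : orderOf ((x : B ⧸ S)) = p := by
    apply orderOf_eq_prime
    · rw [← QuotientGroup.mk_pow]
      exact (QuotientGroup.eq_one_iff _).mpr hxp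
    · exact fun h => hxI ((QuotientGroup.eq_one_iff x).mp h)
  have hgenS : ∀ w ∈ J.carrier, ∃ n : ℤ, ((w : B ⧸ S)) = ((x : B ⧸ S)) ^ n := by
    intro w hw
    obtain ⟨n, hn⟩ := hgenQ w hw
    refine ⟨n, ?_⟩
    have h1 : ((x ^ n : B) : B ⧸ N) = ((w : B ⧸ N)) := by rw [hzpow, hn]
    have h2 : (x ^ n)⁻¹ * w ∈ II.carrier := (bridge II _ _).mp (QuotientAddGroup.eq.mp h1)
    have h3 : ((x ^ n : B) : B ⧸ S) = ((w : B ⧸ S)) := QuotientGroup.eq.mpr h2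
    rw [← h3, QuotientGroup.mk_zpow]
  -- Step C : x is multiplicatively central mod S
  have hcentxS : ∀ yb : B ⧸ S, yb * ((x : B ⧸ S)) = ((x : B ⧸ S)) * yb := by
    intro yb
    obtain ⟨y', rfl⟩ := QuotientGroup.mk_surjective yb
    have hyxy : y' * x * y'⁻¹ ∈ J.carrier := J.mulConj_mem y' hxJ
    obtain ⟨m, hm⟩ := hgenS _ hyxy
    have hm' : ((y' : B ⧸ S)) * ((x : B ⧸ S)) * ((y' : B ⧸ S))⁻¹ = ((x : B ⧸ S)) ^ m := by
      rw [← QuotientGroup.mk_inv, ← QuotientGroup.mk_mul, ← QuotientGroup.mk_mul]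
      exact hm
    have hiter : ∀ s : ℕ,
        (MulAut.conj (((y' : B ⧸ S)) ^ s)) ((x : B ⧸ S)) = ((x : B ⧸ S)) ^ (m ^ s) := by
      intro s
      induction s with
      | zero => rw [pow_zero, map_one, MulAut.one_apply, pow_zero, zpow_one]
      | succ s ih =>
        rw [pow_succ' ((y' : B ⧸ S)) s, map_mul, MulAut.mul_apply, ih, map_zpow,
          MulAut.conj_apply, hm', ← zpow_mul, ← pow_succ']
    have hy1 : ((y' : B ⧸ S)) ^ (p ^ k) = 1 :=
      orderOf_dvd_iff_pow_eq_one.mp ((orderOf_dvd_natCard _).trans hcardS)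
    have hfin : ((x : B ⧸ S)) ^ (m ^ (p ^ k)) = ((x : B ⧸ S)) := by
      have h2 := hiter (p ^ k)
      rw [hy1, map_one, MulAut.one_apply] at h2
      exact h2.symm
    have hmx : ((x : B ⧸ S)) ^ m = ((x : B ⧸ S)) := key_mul p k hp _ hordxS m hfin
    have h3 : ((y' : B ⧸ S)) * ((x : B ⧸ S)) * ((y' : B ⧸ S))⁻¹ = ((x : B ⧸ S)) := by
      rw [hm', hmx]
    exact mul_inv_eq_iff_eq_mul.mp h3
  have hcentwS : ∀ w ∈ J.carrier, ∀ yb : B ⧸ S,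
      yb * ((w : B ⧸ S)) = ((w : B ⧸ S)) * yb := by
    intro w hw yb
    obtain ⟨n, hn⟩ := hgenS w hw
    rw [hn]
    exact (Commute.zpow_right (hcentxS yb) n)
  -- conclusion (d)
  have hd : (y * z)⁻¹ * (z * y) ∈ II.carrier := by
    have h1 : ((y * z : B) : B ⧸ S) = ((z * y : B) : B ⧸ S) := by
      rw [QuotientGroup.mk_mul, QuotientGroup.mk_mul]
      exact hcentwS z hz ((y : B ⧸ S))
    exact QuotientGroup.eq.mp h1
  -- conclusion (c)
  have hc : -(y + z) + (z + y) ∈ II.carrier := by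
    have h1 : ((y + z : B) : B ⧸ N) = ((z + y : B) : B ⧸ N) := by
      rw [QuotientAddGroup.mk_add, QuotientAddGroup.mk_add]
      exact hcentw z hz ((y : B ⧸ N))
    exact QuotientAddGroup.eq.mp h1
  -- conclusion (b)
  have hb : -y + lam z y ∈ II.carrier := by
    have h1 : -(y * z) + (z * y) ∈ II.carrier := (bridge II _ _).mpr hd
    have h2 : ((z * y : B) : B ⧸ N) = ((y : B ⧸ N)) + ((z : B ⧸ N)) := by
      rw [← (QuotientAddGroup.eq.mpr h1 : ((y * z : B) : B ⧸ N) = _)]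
      exact hmuladd y z hz
    have h3 : ((lam z y : B) : B ⧸ N) = ((y : B ⧸ N)) := by
      rw [show lam z y = -z + z * y from rfl, QuotientAddGroup.mk_add,
        QuotientAddGroup.mk_neg, h2, hcentw z hz ((y : B ⧸ N)), ← add_assoc,
        neg_add_cancel, zero_add]
    exact QuotientAddGroup.eq.mp h3.symm
  exact ⟨hb, hc, hd⟩

end SkewBrace

namespace SkewBrace

/-- A finite supersoluble brace of prime power order is centrally nilpotent. -/
theorem isCentrallyNilpotent_of_primePow_supersoluble (B : Type*) [SkewBrace B]
    [Finite B] (p k : ℕ) (hp : p.Prime) (hcard : Nat.card B = p ^ k)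
    (hB : IsSupersoluble B) : IsCentrallyNilpotent B := by
  obtain ⟨n, I, h0, hn, hsub, hfac⟩ := hB
  have main : ∀ i, i ≤ n → (I i).carrier ⊆ zetaChain B i := by
    intro i
    induction i with
    | zero =>
      intro _
      rw [h0]
      intro z hz
      exact hz
    | succ i ih =>
      intro hle
      have hlt : i < n := hle
      have hi := ih (Nat.le_of_lt hlt)
      have hqex : ∃ q : ℕ, QuotPrimeOrder (I i).carrier (I (i + 1)).carrier q := by
        rcases hfac i hlt with ⟨⟨x, hxJ, hgen, hfree⟩, _⟩ | h
        · exfalso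
          have h1 : ((addOrderOf x : ℤ)) • x ∈ (I i).carrier := by
            rw [natCast_zsmul, addOrderOf_nsmul_eq_zero x]
            exact (I i).zero_mem
          have h2 := hfree _ h1
          have h3 : addOrderOf x ≠ 0 := (addOrderOf_pos x).ne'
          exact h3 (by exact_mod_cast h2)
        · exact h
      intro z hz
      show MemZetaQuotRel Set.univ (zetaChain B i) z
      exact ⟨⟨Set.mem_univ z,
        fun y _ => hi (crux p k hp hcard (I i) (I (i + 1)) hqex z hz y).1,
        fun y _ => hi (crux p k hp hcard (I i) (I (i + 1)) hqex z hz y).2.1⟩,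
        fun y _ => hi (crux p k hp hcard (I i) (I (i + 1)) hqex z hz y).2.2⟩
  have hfinal := main n le_rfl
  rw [hn] at hfinal
  exact ⟨n, Set.eq_univ_of_univ_subset hfinal⟩

end SkewBrace
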